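/- Let x, q ∈ ℝ^d with ‖q‖ = 1, let M > 0, 0 < U < 1 satisfy ‖Ux/M‖ < 1, and m ∈ ℕ. Define P(x) = (Ux/M, ‖Ux/M‖², ‖Ux/M‖⁴, …, ‖Ux/M‖^{2^m}) ∈ ℝ^{d+m} and Q(q) = (q, 1/2, 1/2, …, 1/2) ∈ ℝ^{d+m}. Then ‖P(x) - Q(q)‖² = 1 + m/4 - 2(U/M)⟨q, x⟩ + ‖Ux/M‖^{2^{m+1}}. -/

import Mathlib

open Real RealInnerProductSpace

noncomputable def l2alshP {d : ℕ} (m : ℕ) (U M : ℝ) (x : EuclideanSpace ℝ (Fin d)) :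
    EuclideanSpace ℝ (Fin (d + m)) :=
  (EuclideanSpace.equiv (Fin (d + m)) ℝ).symm
    (Fin.append (EuclideanSpace.equiv (Fin d) ℝ ((U / M) • x))
      (fun j : Fin m => ‖(U / M) • x‖ ^ (2 ^ (j.val + 1))))

noncomputable def l2alshQ {d : ℕ} (m : ℕ) (q : EuclideanSpace ℝ (Fin d)) :
    EuclideanSpace ℝ (Fin (d + m)) :=
  (EuclideanSpace.equiv (Fin (d + m)) ℝ).symm
    (Fin.append (EuclideanSpace.equiv (Fin d) ℝ q) (fun _ : Fin m => (1 / 2 : ℝ)))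

lemma norm_sq_eq_sum {d : ℕ} (v : EuclideanSpace ℝ (Fin d)) : ‖v‖^2 = ∑ i, (v i)^2 := by
  rw [EuclideanSpace.norm_eq, Real.sq_sqrt (Finset.sum_nonneg fun i _ => sq_nonneg _)]
  simp [sq_abs]

theorem l2alsh_identity (d m : ℕ) (U M : ℝ) (q x : EuclideanSpace ℝ (Fin d))
    (hq : ‖q‖ = 1) (hM : 0 < M) (hU0 : 0 < U) (hU1 : U < 1)
    (hxn : ‖(U / M) • x‖ < 1) :
    ‖l2alshP m U M x - l2alshQ m q‖ ^ 2 =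
      1 + (m : ℝ) / 4 - 2 * (U / M) * ⟪q, x⟫ + ‖(U / M) • x‖ ^ (2 ^ (m + 1)) := by
  set a : EuclideanSpace ℝ (Fin d) := (U / M) • x with ha
  set t : ℝ := ‖a‖ with ht
  have h1 : ‖l2alshP m U M x - l2alshQ m q‖ ^ 2 =
      (∑ i : Fin d, (a i - q i)^2) + ∑ j : Fin m, (t ^ (2^(j.val+1)) - 1/2)^2 := by
    rw [norm_sq_eq_sum]
    rw [Fin.sum_univ_add]
    congr 1
    · apply Finset.sum_congr rfl
      intro i _
      simp [l2alshP, l2alshQ, EuclideanSpace.equiv, a]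
    · apply Finset.sum_congr rfl
      intro j _
      simp [l2alshP, l2alshQ, EuclideanSpace.equiv, t, a]
  have h2 : (∑ i : Fin d, (a i - q i)^2) = t^2 - 2 * (U / M) * ⟪q, x⟫ + 1 := by
    have : (∑ i : Fin d, (a i - q i)^2) = ‖a - q‖^2 := by
      rw [norm_sq_eq_sum]
      apply Finset.sum_congr rfl
      intro i _
      simp [EuclideanSpace.equiv]
    rw [this, norm_sub_sq_real, hq]
    have hinner : ⟪a, q⟫ = (U / M) * ⟪q, x⟫ := by
      rw [ha, real_inner_smul_left, real_inner_comm]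
    rw [hinner]; ring
  have h3 : (∑ j : Fin m, (t ^ (2^(j.val+1)) - 1/2)^2) =
      t ^ (2^(m+1)) - t^2 + (m : ℝ)/4 := by
    have hstep : ∀ j : Fin m, (t ^ (2^(j.val+1)) - 1/2)^2 =
        (t ^ (2^(j.val+2)) - t ^ (2^(j.val+1))) + 1/4 := by
      intro j
      have : (t ^ (2^(j.val+1)))^2 = t ^ (2^(j.val+2)) := by
        rw [← pow_mul]; ring_nf
      nlinarith [this]
    rw [Finset.sum_congr rfl (fun j _ => hstep j), Finset.sum_add_distrib]
    rw [Fin.sum_univ_eq_sum_range (fun j => t ^ (2^(j+2)) - t ^ (2^(j+1)))]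
    have := Finset.sum_range_sub (fun j => t ^ (2^(j+1))) m
    rw [this]
    simp [pow_one]
    ring
  rw [h1, h2, h3]
  ring
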